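/- Let Z be a subset of [1,m] × [1,n], and let R be the polynomial ring over C in variables x_{ij} for (i,j) in ([1,m] × [1,n]) \ Z. Let G_2(Z) be the set of two-by-two minors of the generic m-by-n matrix whose (i,j) entry is x_{ij} for (i,j) not in Z and 0 for (i,j) in Z. Then G_2(Z) is a Gröbner basis of the ideal it generates with respect to the degree reverse lexicographic order induced by any total order on the variables. -/

import Mathlib

set_option linter.unusedSectionVars false
set_option maxHeartbeats 1000000



/-- The degree reverse lexicographic order (as a strict "greater than" relation on
exponent vectors) induced by a strict total order `vlt` on the variables, in which
`μ > ν` iff `deg μ > deg ν`, or the degrees agree and at the least variable (the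
"rightmost" one) where `μ` and `ν` differ, `μ` has the smaller exponent. -/
def degRevLexGT {σ : Type*} (vlt : σ → σ → Prop) (μ ν : σ →₀ ℕ) : Prop :=
  (ν.sum fun _ k => k) < (μ.sum fun _ k => k) ∨
    ((μ.sum fun _ k => k) = (ν.sum fun _ k => k) ∧
      ∃ v, μ v < ν v ∧ ∀ w, vlt w v → μ w = ν w)

/-- `d` is the initial (leading) exponent of `f` for the strict order `gt`. -/
def IsInitial {σ : Type*} (gt : (σ →₀ ℕ) → (σ →₀ ℕ) → Prop)
    (f : MvPolynomial σ ℂ) (d : σ →₀ ℕ) : Prop :=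
  d ∈ f.support ∧ ∀ d' ∈ f.support, d' = d ∨ gt d d'

/-- The initial ideal of `I`: the ideal generated by the initial monomials of all
nonzero elements of `I`. -/
noncomputable def initialIdeal {σ : Type*} (gt : (σ →₀ ℕ) → (σ →₀ ℕ) → Prop)
    (I : Ideal (MvPolynomial σ ℂ)) : Ideal (MvPolynomial σ ℂ) :=
  Ideal.span {m | ∃ f ∈ I, f ≠ 0 ∧ ∃ d, IsInitial gt f d ∧ m = MvPolynomial.monomial d 1}

/-- The `(a,b)` entry of the generic `m × n` matrix with prescribed zeros on `Z`. -/
noncomputable def genEntry {m n : ℕ} (Z : Set (Fin m × Fin n)) (a : Fin m) (b : Fin n) :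
    MvPolynomial {p : Fin m × Fin n // p ∉ Z} ℂ :=
  open Classical in if h : (a, b) ∈ Z then 0 else MvPolynomial.X ⟨(a, b), h⟩

/-- The set of two-by-two minors of the generic `m × n` matrix with zeros on `Z`. -/
def minorsSet {m n : ℕ} (Z : Set (Fin m × Fin n)) :
    Set (MvPolynomial {p : Fin m × Fin n // p ∉ Z} ℂ) :=
  {f | ∃ i k : Fin m, ∃ j l : Fin n, i < k ∧ j < l ∧
    f = genEntry Z i j * genEntry Z k l - genEntry Z i l * genEntry Z k j}

namespace Stmt6

open Relation

/-- Newman's lemma. -/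
theorem newman {α : Type*} {ρ : α → α → Prop} (wf : WellFounded (fun x y => ρ y x))
    (lc : ∀ a b c, ρ a b → ρ a c → Join (ReflTransGen ρ) b c) :
    ∀ a b c, ReflTransGen ρ a b → ReflTransGen ρ a c → Join (ReflTransGen ρ) b c := by
  intro a
  induction a using wf.induction with
  | _ a ih =>
    intro b c hab hac
    rcases hab.cases_head with rfl | ⟨b1, hab1, hb1b⟩
    · exact ⟨c, hac, ReflTransGen.refl⟩
    rcases hac.cases_head with rfl | ⟨c1, hac1, hc1c⟩
    · exact ⟨b, ReflTransGen.refl, hab⟩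
    obtain ⟨d, hb1d, hc1d⟩ := lc a b1 c1 hab1 hac1
    obtain ⟨e, hbe, hde⟩ := ih b1 hab1 b d hb1b hb1d
    obtain ⟨f, hcf, hef⟩ := ih c1 hac1 c e hc1c (hc1d.trans hde)
    exact ⟨f, hbe.trans hef, hcf⟩

theorem conn_join {α : Type*} {ρ : α → α → Prop}
    (conf : ∀ a b c, ReflTransGen ρ a b → ReflTransGen ρ a c → Join (ReflTransGen ρ) b c)
    {a b : α} (h : ReflTransGen (fun x y => ρ x y ∨ ρ y x) a b) :
    Join (ReflTransGen ρ) a b := by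
  induction h with
  | refl => exact ⟨a, ReflTransGen.refl, ReflTransGen.refl⟩
  | tail _ hbc ih =>
    obtain ⟨d, had, hbd⟩ := ih
    rcases hbc with hbc | hcb
    · obtain ⟨e, hde, hce⟩ := conf _ _ _ hbd (ReflTransGen.single hbc)
      exact ⟨e, had.trans hde, hce⟩
    · exact ⟨d, had, ReflTransGen.head hcb hbd⟩

section QQ

variable {σ : Type*} [DecidableEq σ]

/-- the degree-2 "pair monomial" -/
noncomputable def qq (a b : σ) : σ →₀ ℕ := Finsupp.single a 1 + Finsupp.single b 1

theorem qq_sum (a b : σ) : ((qq a b).sum fun _ k => k) = 2 := by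
  rw [qq, Finsupp.sum_add_index'] <;> simp

theorem qq_apply (a b x : σ) : qq a b x = (if a = x then 1 else 0) + (if b = x then 1 else 0) := by
  simp [qq, Finsupp.single_apply]

theorem qq_ne {a b c d : σ} (h1 : a ≠ c) (h2 : a ≠ d) : qq a b ≠ qq c d := by
  intro h
  have := DFunLike.congr_fun h a
  rw [qq_apply, qq_apply] at this
  have hca : ¬ c = a := fun e => h1 e.symm
  have hda : ¬ d = a := fun e => h2 e.symm
  simp only [hca, hda, if_true, if_false, if_pos rfl] at this
  split_ifs at this <;> omega

end QQ

section GT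

variable {σ : Type*} [LinearOrder σ]

local notation "G" => degRevLexGT (fun x y : σ => x < y)

theorem gt_total (μ ν : σ →₀ ℕ) : μ = ν ∨ G μ ν ∨ G ν μ := by
  rcases lt_trichotomy (μ.sum fun _ k => k) (ν.sum fun _ k => k) with h | h | h
  · exact Or.inr (Or.inr (Or.inl h))
  · by_cases he : μ = ν
    · exact Or.inl he
    · have hex : ∃ x, μ x ≠ ν x := by
        by_contra hc; push_neg at hc; exact he (Finsupp.ext hc)
      classical
      set s : Finset σ := (μ.support ∪ ν.support).filter (fun x => μ x ≠ ν x) with hs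
      have hsne : s.Nonempty := by
        obtain ⟨x, hx⟩ := hex
        refine ⟨x, Finset.mem_filter.2 ⟨?_, hx⟩⟩
        rcases Nat.eq_zero_or_pos (μ x) with h0 | h0
        · have : ν x ≠ 0 := by omega
          exact Finset.mem_union_right _ (Finsupp.mem_support_iff.2 this)
        · exact Finset.mem_union_left _ (Finsupp.mem_support_iff.2 (by omega))
      set v := s.min' hsne with hv
      have hvs := s.min'_mem hsne
      have hvne : μ v ≠ ν v := (Finset.mem_filter.1 hvs).2
      have hlow : ∀ w, w < v → μ w = ν w := by
        intro w hw
        by_contra hc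
        have hws : w ∈ s := by
          refine Finset.mem_filter.2 ⟨?_, hc⟩
          rcases Nat.eq_zero_or_pos (μ w) with h0 | h0
          · exact Finset.mem_union_right _ (Finsupp.mem_support_iff.2 (by omega))
          · exact Finset.mem_union_left _ (Finsupp.mem_support_iff.2 (by omega))
        exact absurd (s.min'_le w hws) (not_le.2 hw)
      rcases Nat.lt_or_ge (μ v) (ν v) with hlt | hge
      · exact Or.inr (Or.inl (Or.inr ⟨h, v, hlt, hlow⟩))
      · exact Or.inr (Or.inr (Or.inr ⟨h.symm, v, by omega, fun w hw => (hlow w hw).symm⟩))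
  · exact Or.inr (Or.inl (Or.inl h))

theorem gt_trans {μ ν ρ : σ →₀ ℕ} (h1 : G μ ν) (h2 : G ν ρ) : G μ ρ := by
  rcases h1 with h1 | ⟨hs1, v1, hv1, hl1⟩
  · rcases h2 with h2 | ⟨hs2, _⟩
    · exact Or.inl (h2.trans h1)
    · exact Or.inl (hs2 ▸ h1)
  · rcases h2 with h2 | ⟨hs2, v2, hv2, hl2⟩
    · exact Or.inl (by omega)
    · refine Or.inr ⟨hs1.trans hs2, ?_⟩
      rcases lt_trichotomy v1 v2 with h | h | h
      · have e := hl2 v1 h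
        exact ⟨v1, by omega, fun w hw => (hl1 w hw).trans (hl2 w (hw.trans h))⟩
      · subst h; exact ⟨v1, by omega, fun w hw => (hl1 w hw).trans (hl2 w hw)⟩
      · have e := hl1 v2 h
        exact ⟨v2, by omega, fun w hw => (hl1 w (hw.trans h)).trans (hl2 w hw)⟩

theorem gt_irrefl (μ : σ →₀ ℕ) : ¬ G μ μ := by
  rintro (h | ⟨-, v, hv, -⟩) <;> omega

theorem gt_asymm {μ ν : σ →₀ ℕ} (h1 : G μ ν) (h2 : G ν μ) : False :=
  gt_irrefl μ (gt_trans h1 h2)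

theorem gt_add_iff (τ μ ν : σ →₀ ℕ) : G (τ + μ) (τ + ν) ↔ G μ ν := by
  have hsum : ∀ ξ : σ →₀ ℕ, ((τ + ξ).sum fun _ k => k) = (τ.sum fun _ k => k) + (ξ.sum fun _ k => k) := by
    intro ξ; rw [Finsupp.sum_add_index'] <;> simp
  constructor
  · rintro (h | ⟨hs, v, hv, hl⟩)
    · rw [hsum, hsum] at h; exact Or.inl (by omega)
    · rw [hsum, hsum] at hs
      refine Or.inr ⟨by omega, v, ?_, fun w hw => ?_⟩
      · have := Finsupp.add_apply τ μ v; have := Finsupp.add_apply τ ν v; omega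
      · have h3 := hl w hw
        have h1 := Finsupp.add_apply τ μ w; have h2 := Finsupp.add_apply τ ν w; omega
  · rintro (h | ⟨hs, v, hv, hl⟩)
    · refine Or.inl ?_
      rw [hsum, hsum]; omega
    · refine Or.inr ⟨?_, v, ?_, fun w hw => ?_⟩
      · rw [hsum, hsum]; omega
      · have := Finsupp.add_apply τ μ v; have := Finsupp.add_apply τ ν v; omega
      · have h3 := hl w hw
        have h1 := Finsupp.add_apply τ μ w; have h2 := Finsupp.add_apply τ ν w; omega

theorem q_not_gt_of_min {a b c d mo : σ} (hmo : mo = a ∨ mo = b) (hc : mo ≠ c) (hd : mo ≠ d)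
    (hmin : ∀ y, (y = a ∨ y = b ∨ y = c ∨ y = d) → ¬ y < mo) : ¬ G (qq a b) (qq c d) := by
  rintro (h | ⟨-, v, hv, hl⟩)
  · rw [qq_sum, qq_sum] at h; omega
  · have h1 := qq_apply a b v
    have h2 := qq_apply c d v
    have hvcd : v = c ∨ v = d := by
      by_contra hc; push_neg at hc
      rcases hc with ⟨hc1, hc2⟩
      simp [Ne.symm hc1, Ne.symm hc2] at h2
      omega
    have hvmo : ¬ v < mo := hmin v (by tauto)
    have hvne : v ≠ mo := by rintro rfl; rcases hvcd with rfl | rfl <;> simp_all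
    have : mo < v := by rcases lt_trichotomy v mo with h | h | h <;> simp_all
    have h3 := hl mo this
    have h4 := qq_apply a b mo
    have h5 := qq_apply c d mo
    rcases hmo with rfl | rfl <;> simp [Ne.symm hc, Ne.symm hd] at h4 h5 <;> omega


/-- The key degrevlex fact: the "doubly bad" configuration of six strict
inequalities among quadratic monomials in nine distinct variables is impossible. -/
theorem lemQ {A00 A01 A02 A10 A11 A12 A20 A21 A22 : σ}
    (d1 : A00 ≠ A01) (d2 : A00 ≠ A10) (d3 : A01 ≠ A02) (d4 : A01 ≠ A11)
    (d5 : A02 ≠ A01) (d6 : A02 ≠ A22) (d7 : A10 ≠ A11) (d8 : A10 ≠ A20)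
    (d9 : A11 ≠ A01) (d10 : A11 ≠ A10) (d11 : A12 ≠ A10) (d12 : A12 ≠ A22)
    (d13 : A20 ≠ A10) (d14 : A20 ≠ A22) (d15 : A21 ≠ A11) (d16 : A21 ≠ A20)
    (d17 : A22 ≠ A02) (d18 : A22 ≠ A20)
    (H1 : G (qq A00 A11) (qq A01 A10))
    (H2 : G (qq A00 A22) (qq A02 A20))
    (H3 : G (qq A12 A20) (qq A10 A22))
    (H4 : G (qq A02 A21) (qq A01 A22))
    (H5 : G (qq A01 A12) (qq A02 A11))
    (H6 : G (qq A10 A21) (qq A11 A20)) : False := by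
  classical
  set s : Finset σ := insert A00 (insert A01 (insert A02 (insert A10 (insert A11
    (insert A12 (insert A20 (insert A21 ({A22} : Finset σ)))))))) with hs
  have hsne : s.Nonempty := ⟨A00, by simp [hs]⟩
  have hmem : ∀ y : σ, (y = A00 ∨ y = A01 ∨ y = A02 ∨ y = A10 ∨ y = A11 ∨ y = A12 ∨
      y = A20 ∨ y = A21 ∨ y = A22) → y ∈ s := by
    intro y hy; simp only [hs, Finset.mem_insert, Finset.mem_singleton]; tauto
  obtain ⟨mo, hmodef⟩ : ∃ mo : σ, mo = s.min' hsne := ⟨_, rfl⟩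
  have hmin : ∀ y : σ, (y = A00 ∨ y = A01 ∨ y = A02 ∨ y = A10 ∨ y = A11 ∨ y = A12 ∨
      y = A20 ∨ y = A21 ∨ y = A22) → ¬ y < mo :=
    fun y hy => hmodef ▸ not_lt.2 (s.min'_le y (hmem y hy))
  have hm : mo ∈ s := hmodef ▸ s.min'_mem hsne
  rw [hs] at hm
  simp only [Finset.mem_insert, Finset.mem_singleton] at hm
  rcases hm with hm | hm | hm | hm | hm | hm | hm | hm | hm
  · exact q_not_gt_of_min (Or.inl hm) (fun e => d1 (hm.symm.trans e)) (fun e => d2 (hm.symm.trans e))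
      (fun y hy => hmin y (by tauto)) H1
  · exact q_not_gt_of_min (Or.inl hm) (fun e => d3 (hm.symm.trans e)) (fun e => d4 (hm.symm.trans e))
      (fun y hy => hmin y (by tauto)) H5
  · exact q_not_gt_of_min (Or.inl hm) (fun e => d5 (hm.symm.trans e)) (fun e => d6 (hm.symm.trans e))
      (fun y hy => hmin y (by tauto)) H4
  · exact q_not_gt_of_min (Or.inl hm) (fun e => d7 (hm.symm.trans e)) (fun e => d8 (hm.symm.trans e))
      (fun y hy => hmin y (by tauto)) H6
  · exact q_not_gt_of_min (Or.inr hm) (fun e => d9 (hm.symm.trans e)) (fun e => d10 (hm.symm.trans e))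
      (fun y hy => hmin y (by tauto)) H1
  · exact q_not_gt_of_min (Or.inl hm) (fun e => d11 (hm.symm.trans e)) (fun e => d12 (hm.symm.trans e))
      (fun y hy => hmin y (by tauto)) H3
  · exact q_not_gt_of_min (Or.inr hm) (fun e => d13 (hm.symm.trans e)) (fun e => d14 (hm.symm.trans e))
      (fun y hy => hmin y (by tauto)) H3
  · exact q_not_gt_of_min (Or.inr hm) (fun e => d15 (hm.symm.trans e)) (fun e => d16 (hm.symm.trans e))
      (fun y hy => hmin y (by tauto)) H6
  · exact q_not_gt_of_min (Or.inr hm) (fun e => d17 (hm.symm.trans e)) (fun e => d18 (hm.symm.trans e))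
      (fun y hy => hmin y (by tauto)) H2

end GT


section GT2

variable {σ : Type*} [LinearOrder σ]

local notation "G" => degRevLexGT (fun x y : σ => x < y)

theorem gt_or_gt {μ ν : σ →₀ ℕ} (h : μ ≠ ν) : G μ ν ∨ G ν μ := by
  rcases gt_total μ ν with h1 | h1 | h1
  · exact absurd h1 h
  · exact Or.inl h1
  · exact Or.inr h1

theorem gt_pattern_iff (τ : σ →₀ ℕ) (c1 c2 c3 c4 : σ) :
    G (τ + Finsupp.single c1 1 + Finsupp.single c2 1)
      (τ + Finsupp.single c3 1 + Finsupp.single c4 1) ↔ G (qq c1 c2) (qq c3 c4) := by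
  rw [add_assoc, add_assoc]
  exact gt_add_iff τ _ _

/-- Decomposition of two ways of removing a pair from the same multiset. -/
theorem overlap_cases {α : Type*} [DecidableEq α] {τ1 τ2 : α →₀ ℕ} {a b c d : α}
    (hab : a ≠ b) (hcd : c ≠ d)
    (h : τ1 + Finsupp.single a 1 + Finsupp.single b 1
       = τ2 + Finsupp.single c 1 + Finsupp.single d 1) :
    (a = c ∧ b = d ∧ τ1 = τ2) ∨ (a = d ∧ b = c ∧ τ1 = τ2) ∨
    (a = c ∧ b ≠ d ∧ ∃ ρ, τ1 = ρ + Finsupp.single d 1 ∧ τ2 = ρ + Finsupp.single b 1) ∨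
    (a = d ∧ b ≠ c ∧ ∃ ρ, τ1 = ρ + Finsupp.single c 1 ∧ τ2 = ρ + Finsupp.single b 1) ∨
    (b = c ∧ a ≠ d ∧ ∃ ρ, τ1 = ρ + Finsupp.single d 1 ∧ τ2 = ρ + Finsupp.single a 1) ∨
    (b = d ∧ a ≠ c ∧ ∃ ρ, τ1 = ρ + Finsupp.single c 1 ∧ τ2 = ρ + Finsupp.single a 1) ∨
    (a ≠ c ∧ a ≠ d ∧ b ≠ c ∧ b ≠ d ∧
      ∃ ρ, τ1 = ρ + Finsupp.single c 1 + Finsupp.single d 1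
         ∧ τ2 = ρ + Finsupp.single a 1 + Finsupp.single b 1) := by
  have hpt : ∀ x, τ1 x + (if a = x then 1 else 0) + (if b = x then 1 else 0)
      = τ2 x + (if c = x then 1 else 0) + (if d = x then 1 else 0) := by
    intro x
    have := DFunLike.congr_fun h x
    simpa [Finsupp.single_apply] using this
  by_cases hac : a = c
  · by_cases hbd : b = d
    · refine Or.inl ⟨hac, hbd, ?_⟩
      ext x
      have := hpt x
      subst hac hbd
      split_ifs at this <;> omega
    · refine Or.inr (Or.inr (Or.inl ⟨hac, hbd, τ1 - Finsupp.single d 1, ?_, ?_⟩)) <;>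
      · ext x
        have h1 := hpt x
        simp [Finsupp.tsub_apply, Finsupp.single_apply, Finsupp.add_apply]
        subst hac
        split_ifs at h1 ⊢ <;> first | omega | simp_all
  · by_cases had : a = d
    · by_cases hbc : b = c
      · refine Or.inr (Or.inl ⟨had, hbc, ?_⟩)
        ext x
        have := hpt x
        subst had hbc
        split_ifs at this <;> omega
      · refine Or.inr (Or.inr (Or.inr (Or.inl ⟨had, hbc, τ1 - Finsupp.single c 1, ?_, ?_⟩))) <;>
        · ext x
          have h1 := hpt x
          simp [Finsupp.tsub_apply, Finsupp.single_apply, Finsupp.add_apply]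
          subst had
          split_ifs at h1 ⊢ <;> first | omega | simp_all
    · by_cases hbc : b = c
      · refine Or.inr (Or.inr (Or.inr (Or.inr (Or.inl ⟨hbc, had, τ1 - Finsupp.single d 1, ?_, ?_⟩)))) <;>
        · ext x
          have h1 := hpt x
          simp [Finsupp.tsub_apply, Finsupp.single_apply, Finsupp.add_apply]
          subst hbc
          split_ifs at h1 ⊢ <;> first | omega | simp_all
      · by_cases hbd : b = d
        · refine Or.inr (Or.inr (Or.inr (Or.inr (Or.inr (Or.inl ⟨hbd, hac, τ1 - Finsupp.single c 1, ?_, ?_⟩))))) <;>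
          · ext x
            have h1 := hpt x
            simp [Finsupp.tsub_apply, Finsupp.single_apply, Finsupp.add_apply]
            subst hbd
            split_ifs at h1 ⊢ <;> first | omega | simp_all
        · refine Or.inr (Or.inr (Or.inr (Or.inr (Or.inr (Or.inr
            ⟨hac, had, hbc, hbd, τ1 - Finsupp.single c 1 - Finsupp.single d 1, ?_, ?_⟩))))) <;>
          · ext x
            have h1 := hpt x
            simp [Finsupp.tsub_apply, Finsupp.single_apply, Finsupp.add_apply]
            split_ifs at h1 ⊢ <;> first | omega | simp_all

end GT2

section Main

variable {m n : ℕ} {Z : Set (Fin m × Fin n)}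

abbrev σZ (Z : Set (Fin m × Fin n)) := {p : Fin m × Fin n // p ∉ Z}

abbrev FF (Z : Set (Fin m × Fin n)) := σZ Z →₀ ℕ

/-- cell as a variable -/
def cl (i : Fin m) (j : Fin n) (h : (i,j) ∉ Z) : σZ Z := ⟨(i,j), h⟩

/-- exponent of one cell -/
noncomputable def sg (i : Fin m) (j : Fin n) (h : (i,j) ∉ Z) : FF Z :=
  Finsupp.single (cl i j h) 1

theorem cl_inj {i i' : Fin m} {j j' : Fin n} {h : (i,j) ∉ Z} {h' : (i',j') ∉ Z}
    (he : cl i j h = cl i' j' h') : i = i' ∧ j = j' := by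
  rw [cl, cl, Subtype.mk.injEq, Prod.mk.injEq] at he
  exact he

theorem cl_ne {i i' : Fin m} {j j' : Fin n} {h : (i,j) ∉ Z} {h' : (i',j') ∉ Z}
    (hne : i ≠ i' ∨ j ≠ j') : cl i j h ≠ cl i' j' h' := by
  intro he
  rcases cl_inj he with ⟨rfl, rfl⟩
  rcases hne with h | h <;> exact h rfl

/-- one 2×2 exchange move on exponent vectors -/
def Mv (w w' : FF Z) : Prop :=
  ∃ (i k : Fin m) (j l : Fin n) (h1 : (i,j) ∉ Z) (h2 : (k,l) ∉ Z)
    (h3 : (i,l) ∉ Z) (h4 : (k,j) ∉ Z) (τ : FF Z),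
      i ≠ k ∧ j ≠ l ∧ w = τ + sg i j h1 + sg k l h2 ∧ w' = τ + sg i l h3 + sg k j h4

/-- the exponent contains the leading monomial of a "monomial minor" -/
def Killed (w : FF Z) : Prop :=
  ∃ (i k : Fin m) (j l : Fin n) (h1 : (i,j) ∉ Z) (h2 : (k,l) ∉ Z),
      i ≠ k ∧ j ≠ l ∧ ((i,l) ∈ Z ∨ (k,j) ∈ Z) ∧ ∃ τ : FF Z, w = τ + sg i j h1 + sg k l h2

theorem killed_of {w : FF Z} (i k : Fin m) (j l : Fin n) (h1 : (i,j) ∉ Z) (h2 : (k,l) ∉ Z)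
    (hik : i ≠ k) (hjl : j ≠ l) (hz : (i,l) ∈ Z ∨ (k,j) ∈ Z) (τ : FF Z)
    (hw : w = τ + sg i j h1 + sg k l h2) : Killed w :=
  ⟨i, k, j, l, h1, h2, hik, hjl, hz, τ, hw⟩

theorem killed_mv {w w' : FF Z} (hk : Killed w) (hm : Mv w w') : Killed w' := by
  classical
  obtain ⟨a1, a2, b1, b2, hA, hB, ha, hb, hz, τk, hwk⟩ := hk
  obtain ⟨c1, c2, d1, d2, g1, g2, g3, g4, τm, hc, hd, hwm, hw'⟩ := hm
  have heq : τk + Finsupp.single (cl a1 b1 hA) 1 + Finsupp.single (cl a2 b2 hB) 1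
      = τm + Finsupp.single (cl c1 d1 g1) 1 + Finsupp.single (cl c2 d2 g2) 1 := by
    have h0 := hwk.symm.trans hwm
    simpa [sg] using h0
  have hab : cl a1 b1 hA ≠ cl a2 b2 hB := cl_ne (Or.inl ha)
  have hcd : cl c1 d1 g1 ≠ cl c2 d2 g2 := cl_ne (Or.inl hc)
  rcases overlap_cases hab hcd heq with
    ⟨e1, e2, -⟩ | ⟨e1, e2, -⟩ |
    ⟨e1, e2, ρ, ht1, ht2⟩ | ⟨e1, e2, ρ, ht1, ht2⟩ |
    ⟨e1, e2, ρ, ht1, ht2⟩ | ⟨e1, e2, ρ, ht1, ht2⟩ |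
    ⟨e1, e2, e3, e4, ρ, ht1, ht2⟩
  · -- A=C, B=D : contradiction with hz
    obtain ⟨rfl, rfl⟩ := cl_inj e1
    obtain ⟨rfl, rfl⟩ := cl_inj e2
    rcases hz with hz | hz
    · exact absurd hz g3
    · exact absurd hz g4
  · -- A=D, B=C : contradiction with hz
    obtain ⟨rfl, rfl⟩ := cl_inj e1
    obtain ⟨rfl, rfl⟩ := cl_inj e2
    rcases hz with hz | hz
    · exact absurd hz g4
    · exact absurd hz g3
  · -- A=C, B≠D : (c1,d1) = (a1,b1)
    obtain ⟨rfl, rfl⟩ := cl_inj e1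
    rcases hz with hz | hz
    · have hne : d2 ≠ b2 := by rintro rfl; exact g3 hz
      refine killed_of a1 a2 d2 b2 g3 hB ha hne (Or.inl hz) (ρ + sg c2 b1 g4) ?_
      rw [hw', ht2]; unfold sg; abel
    · have hne : c2 ≠ a2 := by rintro rfl; exact g4 hz
      refine killed_of c2 a2 b1 b2 g4 hB hne hb (Or.inr hz) (ρ + sg a1 d2 g3) ?_
      rw [hw', ht2]; unfold sg; abel
  · -- A=D, B≠C : (c2,d2) = (a1,b1)
    obtain ⟨rfl, rfl⟩ := cl_inj e1
    rcases hz with hz | hz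
    · have hne : d1 ≠ b2 := by rintro rfl; exact g4 hz
      refine killed_of a1 a2 d1 b2 g4 hB ha hne (Or.inl hz) (ρ + sg c1 b1 g3) ?_
      rw [hw', ht2]; unfold sg; abel
    · have hne : c1 ≠ a2 := by rintro rfl; exact g3 hz
      refine killed_of c1 a2 b1 b2 g3 hB hne hb (Or.inr hz) (ρ + sg a1 d1 g4) ?_
      rw [hw', ht2]; unfold sg; abel
  · -- B=C, A≠D : (c1,d1) = (a2,b2)
    obtain ⟨rfl, rfl⟩ := cl_inj e1
    rcases hz with hz | hz
    · have hne : c2 ≠ a1 := by rintro rfl; exact g4 hz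
      refine killed_of c2 a1 b2 b1 g4 hA hne (fun e => hb e.symm) (Or.inr hz) (ρ + sg a2 d2 g3) ?_
      rw [hw', ht2]; unfold sg; abel
    · have hne : d2 ≠ b1 := by rintro rfl; exact g3 hz
      refine killed_of a2 a1 d2 b1 g3 hA (fun e => ha e.symm) hne (Or.inl hz) (ρ + sg c2 b2 g4) ?_
      rw [hw', ht2]; unfold sg; abel
  · -- B=D, A≠C : (c2,d2) = (a2,b2)
    obtain ⟨rfl, rfl⟩ := cl_inj e1
    rcases hz with hz | hz
    · have hne : c1 ≠ a1 := by rintro rfl; exact g3 hz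
      refine killed_of c1 a1 b2 b1 g3 hA hne (fun e => hb e.symm) (Or.inr hz) (ρ + sg a2 d1 g4) ?_
      rw [hw', ht2]; unfold sg; abel
    · have hne : d1 ≠ b1 := by rintro rfl; exact g4 hz
      refine killed_of a2 a1 d1 b1 g4 hA (fun e => ha e.symm) hne (Or.inl hz) (ρ + sg c1 b2 g3) ?_
      rw [hw', ht2]; unfold sg; abel
  · -- disjoint
    refine killed_of a1 a2 b1 b2 hA hB ha hb hz (ρ + sg c1 d2 g3 + sg c2 d1 g4) ?_
    rw [hw', ht2]; unfold sg; abel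

theorem mv_of {w w' : FF Z} (i k : Fin m) (j l : Fin n) (h1 : (i,j) ∉ Z) (h2 : (k,l) ∉ Z)
    (h3 : (i,l) ∉ Z) (h4 : (k,j) ∉ Z) (hik : i ≠ k) (hjl : j ≠ l) (τ : FF Z)
    (hw : w = τ + sg i j h1 + sg k l h2) (hw' : w' = τ + sg i l h3 + sg k j h4) : Mv w w' :=
  ⟨i, k, j, l, h1, h2, h3, h4, τ, hik, hjl, hw, hw'⟩

theorem sg_irrel {i : Fin m} {j : Fin n} (h h' : (i,j) ∉ Z) : sg i j h = sg i j h' := rfl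

theorem cl_eq {i i' : Fin m} {j j' : Fin n} (hi : i = i') (hj : j = j')
    (h : (i,j) ∉ Z) (h' : (i',j') ∉ Z) : cl i j h = cl i' j' h' := by
  subst hi hj; rfl

theorem cl_irrel {i : Fin m} {j : Fin n} (h h' : (i,j) ∉ Z) : cl i j h = cl i j h' := rfl

theorem ne_of_cells {τ : FF Z} {c1 c2 c3 c4 : σZ Z} (hq : qq c1 c2 ≠ qq c3 c4) :
    τ + Finsupp.single c1 1 + Finsupp.single c2 1
      ≠ τ + Finsupp.single c3 1 + Finsupp.single c4 1 := by
  intro e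
  refine hq ?_
  ext x
  have h0 := DFunLike.congr_fun e x
  simp only [Finsupp.add_apply] at h0
  simp only [qq, Finsupp.add_apply]
  omega

variable (r : LinearOrder (σZ Z))

/-- one reduction step (`none` is the zero-polynomial sink for killed monomials) -/
def Stp (x y : Option (FF Z)) : Prop :=
  (∃ w w', x = some w ∧ y = some w' ∧ Mv w w' ∧ degRevLexGT r.lt w w') ∨
  (∃ w, x = some w ∧ y = none ∧ Killed w)

theorem stp_mv {w w' : FF Z} (hm : Mv w w') (hg : degRevLexGT r.lt w w') :
    Stp r (some w) (some w') := Or.inl ⟨w, w', rfl, rfl, hm, hg⟩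

theorem stp_kill {w : FF Z} (hk : Killed w) : Stp r (some w) none := Or.inr ⟨w, rfl, rfl, hk⟩

theorem bgt_or_bgt {μ ν : FF Z} (h : μ ≠ ν) : degRevLexGT r.lt μ ν ∨ degRevLexGT r.lt ν μ := by
  letI := r
  exact gt_or_gt h

theorem bgt_trans {μ ν ξ : FF Z} (h1 : degRevLexGT r.lt μ ν) (h2 : degRevLexGT r.lt ν ξ) :
    degRevLexGT r.lt μ ξ := by
  letI := r
  exact gt_trans h1 h2

theorem bgt_asymm {μ ν : FF Z} (h1 : degRevLexGT r.lt μ ν) (h2 : degRevLexGT r.lt ν μ) : False := by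
  letI := r
  exact gt_asymm h1 h2

theorem bgt_irrefl (μ : FF Z) : ¬ degRevLexGT r.lt μ μ := by
  letI := r
  exact gt_irrefl μ

theorem gt_of_qq {w w' τ : FF Z} {c1 c2 c3 c4 : σZ Z}
    (hw : w = τ + Finsupp.single c1 1 + Finsupp.single c2 1)
    (hw' : w' = τ + Finsupp.single c3 1 + Finsupp.single c4 1)
    (h : degRevLexGT r.lt (qq c1 c2) (qq c3 c4)) : degRevLexGT r.lt w w' := by
  subst hw hw'
  letI := r
  exact (gt_pattern_iff τ c1 c2 c3 c4).mpr h

theorem qq_of_gt {w w' τ : FF Z} {c1 c2 c3 c4 : σZ Z}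
    (hw : w = τ + Finsupp.single c1 1 + Finsupp.single c2 1)
    (hw' : w' = τ + Finsupp.single c3 1 + Finsupp.single c4 1)
    (h : degRevLexGT r.lt w w') : degRevLexGT r.lt (qq c1 c2) (qq c3 c4) := by
  subst hw hw'
  letI := r
  exact (gt_pattern_iff τ c1 c2 c3 c4).mp h

open Relation in
theorem sharedLC (i k p : Fin m) (j l q : Fin n)
    (h1 : (i,j) ∉ Z) (h2 : (k,l) ∉ Z) (h3 : (i,l) ∉ Z) (h4 : (k,j) ∉ Z)
    (h2' : (p,q) ∉ Z) (h3' : (i,q) ∉ Z) (h4' : (p,j) ∉ Z)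
    (hik : i ≠ k) (hip : i ≠ p) (hjl : j ≠ l) (hjq : j ≠ q)
    (hklpq : k ≠ p ∨ l ≠ q) (ρ : FF Z)
    (hgt1 : degRevLexGT r.lt (qq (cl i j h1) (cl k l h2)) (qq (cl i l h3) (cl k j h4)))
    (hgt2 : degRevLexGT r.lt (qq (cl i j h1) (cl p q h2')) (qq (cl i q h3') (cl p j h4'))) :
    Relation.Join (Relation.ReflTransGen (Stp r))
      (some (ρ + sg i l h3 + sg k j h4 + sg p q h2'))
      (some (ρ + sg i q h3' + sg p j h4' + sg k l h2)) := by
  classical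
  by_cases hkp : k = p
  · -- shared row for the two off cells; one step connects the two results
    subst hkp
    have hlq : l ≠ q := by
      rcases hklpq with h | h
      · exact absurd rfl h
      · exact h
    have eB : ρ + sg i l h3 + sg k j h4 + sg k q h2'
        = (ρ + sg k j h4) + Finsupp.single (cl i l h3) 1 + Finsupp.single (cl k q h2') 1 := by
      unfold sg; abel
    have eC : ρ + sg i q h3' + sg k j h4' + sg k l h2
        = (ρ + sg k j h4) + Finsupp.single (cl i q h3') 1 + Finsupp.single (cl k l h2) 1 := by
      rw [sg_irrel h4' h4]
      unfold sg; abel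
    have hne : (ρ + sg i l h3 + sg k j h4 + sg k q h2')
        ≠ (ρ + sg i q h3' + sg k j h4' + sg k l h2) := by
      rw [eB, eC]
      exact ne_of_cells (qq_ne (cl_ne (Or.inr hlq)) (cl_ne (Or.inl hik)))
    rcases bgt_or_bgt r hne with hgt | hgt
    · exact ⟨_, ReflTransGen.single
        (stp_mv r (mv_of i k l q h3 h2' h3' h2 hik hlq (ρ + sg k j h4) eB eC) hgt),
        ReflTransGen.refl⟩
    · exact ⟨_, ReflTransGen.refl, ReflTransGen.single
        (stp_mv r (mv_of i k q l h3' h2 h3 h2' hik (Ne.symm hlq) (ρ + sg k j h4) eC eB) hgt)⟩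
  · by_cases hlq : l = q
    · -- shared column
      subst hlq
      have eB : ρ + sg i l h3 + sg k j h4 + sg p l h2'
          = (ρ + sg i l h3) + Finsupp.single (cl k j h4) 1 + Finsupp.single (cl p l h2') 1 := by
        unfold sg; abel
      have eC : ρ + sg i l h3' + sg p j h4' + sg k l h2
          = (ρ + sg i l h3) + Finsupp.single (cl k l h2) 1 + Finsupp.single (cl p j h4') 1 := by
        rw [sg_irrel h3' h3]
        unfold sg; abel
      have hne : (ρ + sg i l h3 + sg k j h4 + sg p l h2')
          ≠ (ρ + sg i l h3' + sg p j h4' + sg k l h2) := by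
        rw [eB, eC]
        exact ne_of_cells (qq_ne (cl_ne (Or.inr hjl)) (cl_ne (Or.inl hkp)))
      rcases bgt_or_bgt r hne with hgt | hgt
      · exact ⟨_, ReflTransGen.single
          (stp_mv r (mv_of k p j l h4 h2' h2 h4' hkp hjl (ρ + sg i l h3) eB eC) hgt),
          ReflTransGen.refl⟩
      · exact ⟨_, ReflTransGen.refl, ReflTransGen.single
          (stp_mv r (mv_of k p l j h2 h4' h4 h2' hkp (Ne.symm hjl) (ρ + sg i l h3) eC eB) hgt)⟩
    · -- generic: three rows, three columns
      by_cases hkq : (k,q) ∈ Z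
      · -- both sides killed
        refine ⟨none, ReflTransGen.single (stp_kill r ?_), ReflTransGen.single (stp_kill r ?_)⟩
        · refine killed_of k p j q h4 h2' hkp hjq (Or.inl hkq) (ρ + sg i l h3) ?_
          unfold sg; abel
        · refine killed_of i k q l h3' h2 hik (Ne.symm hlq) (Or.inr hkq) (ρ + sg p j h4') ?_
          unfold sg; abel
      · by_cases hpl : (p,l) ∈ Z
        · refine ⟨none, ReflTransGen.single (stp_kill r ?_), ReflTransGen.single (stp_kill r ?_)⟩
          · refine killed_of i p l q h3 h2' hip hlq (Or.inr hpl) (ρ + sg k j h4) ?_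
            unfold sg; abel
          · refine killed_of p k j l h4' h2 (Ne.symm hkp) hjl (Or.inl hpl) (ρ + sg i q h3') ?_
            unfold sg; abel
        · -- all nine cells present
          set B := ρ + sg i l h3 + sg k j h4 + sg p q h2' with hB
          set C := ρ + sg i q h3' + sg p j h4' + sg k l h2 with hC
          set Ev := ρ + sg i l h3 + sg k q hkq + sg p j h4' with hEv
          set Fv := ρ + sg i q h3' + sg k j h4 + sg p l hpl with hFv
          have eB1 : B = (ρ + sg i l h3) + Finsupp.single (cl k j h4) 1
              + Finsupp.single (cl p q h2') 1 := by rw [hB]; unfold sg; abel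
          have eE1 : Ev = (ρ + sg i l h3) + Finsupp.single (cl k q hkq) 1
              + Finsupp.single (cl p j h4') 1 := by rw [hEv]; unfold sg; abel
          have eC1 : C = (ρ + sg p j h4') + Finsupp.single (cl i q h3') 1
              + Finsupp.single (cl k l h2) 1 := by rw [hC]; unfold sg; abel
          have eE2 : Ev = (ρ + sg p j h4') + Finsupp.single (cl i l h3) 1
              + Finsupp.single (cl k q hkq) 1 := by rw [hEv]; unfold sg; abel
          have eB2 : B = (ρ + sg k j h4) + Finsupp.single (cl i l h3) 1
              + Finsupp.single (cl p q h2') 1 := by rw [hB]; unfold sg; abel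
          have eF1 : Fv = (ρ + sg k j h4) + Finsupp.single (cl i q h3') 1
              + Finsupp.single (cl p l hpl) 1 := by rw [hFv]; unfold sg; abel
          have eC2 : C = (ρ + sg i q h3') + Finsupp.single (cl k l h2) 1
              + Finsupp.single (cl p j h4') 1 := by rw [hC]; unfold sg; abel
          have eF2 : Fv = (ρ + sg i q h3') + Finsupp.single (cl k j h4) 1
              + Finsupp.single (cl p l hpl) 1 := by rw [hFv]; unfold sg; abel
          have neBE : B ≠ Ev := by
            rw [eB1, eE1]
            exact ne_of_cells (qq_ne (cl_ne (Or.inr hjq)) (cl_ne (Or.inl hkp)))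
          have neCE : C ≠ Ev := by
            rw [eC1, eE2]
            exact ne_of_cells (qq_ne (cl_ne (Or.inr (Ne.symm hlq))) (cl_ne (Or.inl hik)))
          have neBF : B ≠ Fv := by
            rw [eB2, eF1]
            exact ne_of_cells (qq_ne (cl_ne (Or.inr hlq)) (cl_ne (Or.inl hip)))
          have neCF : C ≠ Fv := by
            rw [eC2, eF2]
            exact ne_of_cells (qq_ne (cl_ne (Or.inr (Ne.symm hjl))) (cl_ne (Or.inl hkp)))
          have mvBE : Mv B Ev := mv_of k p j q h4 h2' hkq h4' hkp hjq (ρ + sg i l h3) eB1 eE1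
          have mvEB : Mv Ev B := mv_of k p q j hkq h4' h4 h2' hkp (Ne.symm hjq) (ρ + sg i l h3) eE1 eB1
          have mvCE : Mv C Ev := mv_of i k q l h3' h2 h3 hkq hik (Ne.symm hlq) (ρ + sg p j h4') eC1 eE2
          have mvEC : Mv Ev C := mv_of i k l q h3 hkq h3' h2 hik hlq (ρ + sg p j h4') eE2 eC1
          have mvBF : Mv B Fv := mv_of i p l q h3 h2' h3' hpl hip hlq (ρ + sg k j h4) eB2 eF1
          have mvFB : Mv Fv B := mv_of i p q l h3' hpl h3 h2' hip (Ne.symm hlq) (ρ + sg k j h4) eF1 eB2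
          have mvCF : Mv C Fv := mv_of k p l j h2 h4' h4 hpl hkp (Ne.symm hjl) (ρ + sg i q h3') eC2 eF2
          have mvFC : Mv Fv C := mv_of k p j l h4 hpl h2 h4' hkp hjl (ρ + sg i q h3') eF2 eC2
          rcases bgt_or_bgt r neBE with hBE | hEB
          · rcases bgt_or_bgt r neCE with hCE | hEC
            · exact ⟨some Ev, ReflTransGen.single (stp_mv r mvBE hBE),
                ReflTransGen.single (stp_mv r mvCE hCE)⟩
            · exact ⟨some C, ReflTransGen.head (stp_mv r mvBE hBE)
                (ReflTransGen.single (stp_mv r mvEC hEC)), ReflTransGen.refl⟩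
          · rcases bgt_or_bgt r neCE with hCE | hEC
            · exact ⟨some B, ReflTransGen.refl, ReflTransGen.head (stp_mv r mvCE hCE)
                (ReflTransGen.single (stp_mv r mvEB hEB))⟩
            · rcases bgt_or_bgt r neBF with hBF | hFB
              · rcases bgt_or_bgt r neCF with hCF | hFC
                · exact ⟨some Fv, ReflTransGen.single (stp_mv r mvBF hBF),
                    ReflTransGen.single (stp_mv r mvCF hCF)⟩
                · exact ⟨some C, ReflTransGen.head (stp_mv r mvBF hBF)
                    (ReflTransGen.single (stp_mv r mvFC hFC)), ReflTransGen.refl⟩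
              · rcases bgt_or_bgt r neCF with hCF | hFC
                · exact ⟨some B, ReflTransGen.refl, ReflTransGen.head (stp_mv r mvCF hCF)
                    (ReflTransGen.single (stp_mv r mvFB hFB))⟩
                · exfalso
                  letI := r
                  exact lemQ
                    (cl_ne (Or.inr hjl)) (cl_ne (Or.inl hik)) (cl_ne (Or.inr hlq))
                    (cl_ne (Or.inl hik)) (cl_ne (Or.inr (Ne.symm hlq))) (cl_ne (Or.inl hip))
                    (cl_ne (Or.inr hjl)) (cl_ne (Or.inl hkp)) (cl_ne (Or.inl (Ne.symm hik)))
                    (cl_ne (Or.inr (Ne.symm hjl))) (cl_ne (Or.inr (Ne.symm hjq))) (cl_ne (Or.inl hkp))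
                    (cl_ne (Or.inl (Ne.symm hkp))) (cl_ne (Or.inr hjq)) (cl_ne (Or.inl (Ne.symm hkp)))
                    (cl_ne (Or.inr (Ne.symm hjl))) (cl_ne (Or.inl (Ne.symm hip))) (cl_ne (Or.inr (Ne.symm hjq)))
                    hgt1 hgt2
                    (qq_of_gt r eE1 eB1 hEB) (qq_of_gt r eF1 eB2 hFB)
                    (qq_of_gt r eE2 eC1 hEC) (qq_of_gt r eF2 eC2 hFC)

open Relation in
theorem moveLC {w w1 w2 : FF Z} (hm1 : Mv w w1) (hg1 : degRevLexGT r.lt w w1)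
    (hm2 : Mv w w2) (hg2 : degRevLexGT r.lt w w2) :
    Relation.Join (Relation.ReflTransGen (Stp r)) (some w1) (some w2) := by
  classical
  obtain ⟨i, k, j, l, h1, h2, h3, h4, τ1, hik, hjl, hw1, hw1'⟩ := hm1
  obtain ⟨i', k', j', l', g1, g2, g3, g4, τ2, hik', hjl', hw2, hw2'⟩ := hm2
  have heq : τ1 + Finsupp.single (cl i j h1) 1 + Finsupp.single (cl k l h2) 1
      = τ2 + Finsupp.single (cl i' j' g1) 1 + Finsupp.single (cl k' l' g2) 1 := by
    have h0 := hw1.symm.trans hw2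
    simpa [sg] using h0
  rcases overlap_cases (cl_ne (Or.inl hik)) (cl_ne (Or.inl hik')) heq with
    ⟨e1, e2, ht⟩ | ⟨e1, e2, ht⟩ |
    ⟨e1, e2, ρ, ht1, ht2⟩ | ⟨e1, e2, ρ, ht1, ht2⟩ |
    ⟨e1, e2, ρ, ht1, ht2⟩ | ⟨e1, e2, ρ, ht1, ht2⟩ |
    ⟨e1, e2, e3, e4, ρ, ht1, ht2⟩
  · -- identical moves
    obtain ⟨rfl, rfl⟩ := cl_inj e1
    obtain ⟨rfl, rfl⟩ := cl_inj e2
    have : w2 = w1 := by rw [hw1', hw2', ht]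
    rw [this]
    exact ⟨some w1, ReflTransGen.refl, ReflTransGen.refl⟩
  · -- identical moves, crossed
    obtain ⟨rfl, rfl⟩ := cl_inj e1
    obtain ⟨rfl, rfl⟩ := cl_inj e2
    have : w2 = w1 := by rw [hw1', hw2', ht]; unfold sg; abel
    rw [this]
    exact ⟨some w1, ReflTransGen.refl, ReflTransGen.refl⟩
  · -- shared first cells : (i',j') = (i,j)
    obtain ⟨rfl, rfl⟩ := cl_inj e1
    have hklpq : k ≠ k' ∨ l ≠ l' := by
      by_contra hc
      push_neg at hc
      exact e2 (cl_eq hc.1 hc.2 _ _)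
    have ew1 : w = (ρ + Finsupp.single (cl k' l' g2) 1) + Finsupp.single (cl i j h1) 1
        + Finsupp.single (cl k l h2) 1 := by
      rw [hw1, ht1]; unfold sg; abel
    have ew1' : w1 = (ρ + Finsupp.single (cl k' l' g2) 1) + Finsupp.single (cl i l h3) 1
        + Finsupp.single (cl k j h4) 1 := by
      rw [hw1', ht1]; unfold sg; abel
    have ew2 : w = (ρ + Finsupp.single (cl k l h2) 1) + Finsupp.single (cl i j h1) 1
        + Finsupp.single (cl k' l' g2) 1 := by
      rw [hw2, ht2, cl_irrel g1 h1]; unfold sg; abel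
    have ew2' : w2 = (ρ + Finsupp.single (cl k l h2) 1) + Finsupp.single (cl i l' g3) 1
        + Finsupp.single (cl k' j g4) 1 := by
      rw [hw2', ht2]; unfold sg; abel
    have J := sharedLC r i k k' j l l' h1 h2 h3 h4 g2 g3 g4 hik hik' hjl hjl' hklpq ρ
      (qq_of_gt r ew1 ew1' hg1) (qq_of_gt r ew2 ew2' hg2)
    have ee1 : w1 = ρ + sg i l h3 + sg k j h4 + sg k' l' g2 := by
      rw [hw1', ht1]; unfold sg; abel
    have ee2 : w2 = ρ + sg i l' g3 + sg k' j g4 + sg k l h2 := by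
      rw [hw2', ht2]; unfold sg; abel
    rw [ee1, ee2]
    exact J
  · -- (i,j) = (k',l') : shared with second cell of second move
    obtain ⟨rfl, rfl⟩ := cl_inj e1
    have hklpq : k ≠ i' ∨ l ≠ j' := by
      by_contra hc
      push_neg at hc
      exact e2 (cl_eq hc.1 hc.2 _ _)
    have ew1 : w = (ρ + Finsupp.single (cl i' j' g1) 1) + Finsupp.single (cl i j h1) 1
        + Finsupp.single (cl k l h2) 1 := by
      rw [hw1, ht1]; unfold sg; abel
    have ew1' : w1 = (ρ + Finsupp.single (cl i' j' g1) 1) + Finsupp.single (cl i l h3) 1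
        + Finsupp.single (cl k j h4) 1 := by
      rw [hw1', ht1]; unfold sg; abel
    have ew2 : w = (ρ + Finsupp.single (cl k l h2) 1) + Finsupp.single (cl i j h1) 1
        + Finsupp.single (cl i' j' g1) 1 := by
      rw [hw2, ht2, cl_irrel g2 h1]; unfold sg; abel
    have ew2' : w2 = (ρ + Finsupp.single (cl k l h2) 1) + Finsupp.single (cl i j' g4) 1
        + Finsupp.single (cl i' j g3) 1 := by
      rw [hw2', ht2]; unfold sg; abel
    have J := sharedLC r i k i' j l j' h1 h2 h3 h4 g1 g4 g3 hik (Ne.symm hik') hjl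
      (Ne.symm hjl') hklpq ρ (qq_of_gt r ew1 ew1' hg1) (qq_of_gt r ew2 ew2' hg2)
    have ee1 : w1 = ρ + sg i l h3 + sg k j h4 + sg i' j' g1 := by
      rw [hw1', ht1]; unfold sg; abel
    have ee2 : w2 = ρ + sg i j' g4 + sg i' j g3 + sg k l h2 := by
      rw [hw2', ht2]; unfold sg; abel
    rw [ee1, ee2]
    exact J
  · -- (k,l) = (i',j') : shared with first cell of second move
    obtain ⟨rfl, rfl⟩ := cl_inj e1
    have hklpq : i ≠ k' ∨ j ≠ l' := by
      by_contra hc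
      push_neg at hc
      exact e2 (cl_eq hc.1 hc.2 _ _)
    have ew1 : w = (ρ + Finsupp.single (cl k' l' g2) 1) + Finsupp.single (cl k l h2) 1
        + Finsupp.single (cl i j h1) 1 := by
      rw [hw1, ht1]; unfold sg; abel
    have ew1' : w1 = (ρ + Finsupp.single (cl k' l' g2) 1) + Finsupp.single (cl k j h4) 1
        + Finsupp.single (cl i l h3) 1 := by
      rw [hw1', ht1]; unfold sg; abel
    have ew2 : w = (ρ + Finsupp.single (cl i j h1) 1) + Finsupp.single (cl k l h2) 1
        + Finsupp.single (cl k' l' g2) 1 := by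
      rw [hw2, ht2, cl_irrel g1 h2]; unfold sg; abel
    have ew2' : w2 = (ρ + Finsupp.single (cl i j h1) 1) + Finsupp.single (cl k l' g3) 1
        + Finsupp.single (cl k' l g4) 1 := by
      rw [hw2', ht2]; unfold sg; abel
    have J := sharedLC r k i k' l j l' h2 h1 h4 h3 g2 g3 g4 (Ne.symm hik) hik'
      (Ne.symm hjl) hjl' hklpq ρ (qq_of_gt r ew1 ew1' hg1) (qq_of_gt r ew2 ew2' hg2)
    have ee1 : w1 = ρ + sg k j h4 + sg i l h3 + sg k' l' g2 := by
      rw [hw1', ht1]; unfold sg; abel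
    have ee2 : w2 = ρ + sg k l' g3 + sg k' l g4 + sg i j h1 := by
      rw [hw2', ht2]; unfold sg; abel
    rw [ee1, ee2]
    exact J
  · -- (k,l) = (k',l') : shared second cells
    obtain ⟨rfl, rfl⟩ := cl_inj e1
    have hklpq : i ≠ i' ∨ j ≠ j' := by
      by_contra hc
      push_neg at hc
      exact e2 (cl_eq hc.1 hc.2 _ _)
    have ew1 : w = (ρ + Finsupp.single (cl i' j' g1) 1) + Finsupp.single (cl k l h2) 1
        + Finsupp.single (cl i j h1) 1 := by
      rw [hw1, ht1]; unfold sg; abel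
    have ew1' : w1 = (ρ + Finsupp.single (cl i' j' g1) 1) + Finsupp.single (cl k j h4) 1
        + Finsupp.single (cl i l h3) 1 := by
      rw [hw1', ht1]; unfold sg; abel
    have ew2 : w = (ρ + Finsupp.single (cl i j h1) 1) + Finsupp.single (cl k l h2) 1
        + Finsupp.single (cl i' j' g1) 1 := by
      rw [hw2, ht2, cl_irrel g2 h2]; unfold sg; abel
    have ew2' : w2 = (ρ + Finsupp.single (cl i j h1) 1) + Finsupp.single (cl k j' g4) 1
        + Finsupp.single (cl i' l g3) 1 := by
      rw [hw2', ht2]; unfold sg; abel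
    have J := sharedLC r k i i' l j j' h2 h1 h4 h3 g1 g4 g3 (Ne.symm hik) (Ne.symm hik')
      (Ne.symm hjl) (Ne.symm hjl') hklpq ρ (qq_of_gt r ew1 ew1' hg1) (qq_of_gt r ew2 ew2' hg2)
    have ee1 : w1 = ρ + sg k j h4 + sg i l h3 + sg i' j' g1 := by
      rw [hw1', ht1]; unfold sg; abel
    have ee2 : w2 = ρ + sg k j' g4 + sg i' l g3 + sg i j h1 := by
      rw [hw2', ht2]; unfold sg; abel
    rw [ee1, ee2]
    exact J
  · -- disjoint cells : the two moves commute
    have hq1 : degRevLexGT r.lt (qq (cl i j h1) (cl k l h2)) (qq (cl i l h3) (cl k j h4)) :=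
      qq_of_gt r (by exact hw1) (by exact hw1') hg1
    have hq2 : degRevLexGT r.lt (qq (cl i' j' g1) (cl k' l' g2)) (qq (cl i' l' g3) (cl k' j' g4)) :=
      qq_of_gt r (by exact hw2) (by exact hw2') hg2
    set dd := ρ + sg i l h3 + sg k j h4 + sg i' l' g3 + sg k' j' g4 with hdd
    have ea1 : w1 = (ρ + sg i l h3 + sg k j h4) + Finsupp.single (cl i' j' g1) 1
        + Finsupp.single (cl k' l' g2) 1 := by
      rw [hw1', ht1]; unfold sg; abel
    have ea2 : dd = (ρ + sg i l h3 + sg k j h4) + Finsupp.single (cl i' l' g3) 1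
        + Finsupp.single (cl k' j' g4) 1 := by
      rw [hdd]; unfold sg; abel
    have eb1 : w2 = (ρ + sg i' l' g3 + sg k' j' g4) + Finsupp.single (cl i j h1) 1
        + Finsupp.single (cl k l h2) 1 := by
      rw [hw2', ht2]; unfold sg; abel
    have eb2 : dd = (ρ + sg i' l' g3 + sg k' j' g4) + Finsupp.single (cl i l h3) 1
        + Finsupp.single (cl k j h4) 1 := by
      rw [hdd]; unfold sg; abel
    refine ⟨some dd, ReflTransGen.single (stp_mv r ?_ ?_), ReflTransGen.single (stp_mv r ?_ ?_)⟩
    · exact mv_of i' k' j' l' g1 g2 g3 g4 hik' hjl' _ ea1 ea2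
    · exact gt_of_qq r ea1 ea2 hq2
    · exact mv_of i k j l h1 h2 h3 h4 hik hjl _ eb1 eb2
    · exact gt_of_qq r eb1 eb2 hq1

theorem mv_symm {w w' : FF Z} (h : Mv w w') : Mv w' w := by
  obtain ⟨i, k, j, l, h1, h2, h3, h4, τ, hik, hjl, hw, hw'⟩ := h
  exact mv_of i k l j h3 h4 h1 h2 hik (Ne.symm hjl) τ hw' hw

theorem mv_ne {w w' : FF Z} (h : Mv w w') : w ≠ w' := by
  obtain ⟨i, k, j, l, h1, h2, h3, h4, τ, hik, hjl, hw, hw'⟩ := h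
  rw [hw, hw']
  exact ne_of_cells (qq_ne (cl_ne (Or.inr hjl)) (cl_ne (Or.inl hik)))

theorem stp_none {x : Option (FF Z)} : ¬ Stp r none x := by
  rintro (⟨w, w', h, -⟩ | ⟨w, h, -⟩) <;> exact nomatch h

open Relation in
theorem stpLC : ∀ a b c, Stp r a b → Stp r a c → Relation.Join (Relation.ReflTransGen (Stp r)) b c := by
  rintro a b c (⟨w, w1, rfl, rfl, hmv1, hg1⟩ | ⟨w, rfl, rfl, hk1⟩)
    (⟨w', w2, he, rfl, hmv2, hg2⟩ | ⟨w', he, rfl, hk2⟩)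
  · obtain rfl : w = w' := Option.some.inj he
    exact moveLC r hmv1 hg1 hmv2 hg2
  · obtain rfl : w = w' := Option.some.inj he
    exact ⟨none, ReflTransGen.single (stp_kill r (killed_mv hk2 hmv1)), ReflTransGen.refl⟩
  · obtain rfl : w = w' := Option.some.inj he
    exact ⟨none, ReflTransGen.refl, ReflTransGen.single (stp_kill r (killed_mv hk1 hmv2))⟩
  · exact ⟨none, ReflTransGen.refl, ReflTransGen.refl⟩

noncomputable def deg (w : FF Z) : ℕ := w.sum fun _ k => k

theorem deg_add (w v : FF Z) : deg (w + v) = deg w + deg v := by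
  unfold deg
  rw [Finsupp.sum_add_index'] <;> simp

theorem deg_mv {w w' : FF Z} (h : Mv w w') : deg w' = deg w := by
  obtain ⟨i, k, j, l, h1, h2, h3, h4, τ, hik, hjl, hw, hw'⟩ := h
  rw [hw, hw', deg_add, deg_add, deg_add, deg_add]
  unfold deg sg
  simp [Finsupp.sum_single_index]

theorem apply_le_deg (w : FF Z) (x : σZ Z) : w x ≤ deg w := by
  classical
  by_cases hx : x ∈ w.support
  · exact Finset.single_le_sum (fun a _ => Nat.zero_le (w a)) hx
  · simp [Finsupp.notMem_support_iff.1 hx]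

theorem deg_eq_of_gt {w w' : FF Z} (h : degRevLexGT r.lt w w') : deg w' ≤ deg w := by
  rcases h with h | ⟨h, -⟩
  · exact le_of_lt h
  · exact le_of_eq h.symm

noncomputable def constD (D : ℕ) : FF Z := Finsupp.equivFunOnFinite.symm (fun _ => D)

theorem constD_apply (D : ℕ) (x : σZ Z) : constD D x = D := by
  unfold constD
  simp

open Classical in
noncomputable def meas : Option (FF Z) → ℕ := fun x =>
  match x with
  | none => 0
  | some w => 1 + ((Finset.Icc (0 : FF Z) (constD (deg w))).filter
      (fun v => degRevLexGT r.lt w v)).card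

theorem stp_meas {x y : Option (FF Z)} (h : Stp r x y) : meas r y < meas r x := by
  classical
  rcases h with ⟨w, w', rfl, rfl, hmv, hg⟩ | ⟨w, rfl, rfl, -⟩
  · have hdeg : deg w' = deg w := deg_mv hmv
    show 1 + _ < 1 + _
    have hsub : (Finset.Icc (0 : FF Z) (constD (deg w'))).filter (fun v => degRevLexGT r.lt w' v)
        ⊂ (Finset.Icc (0 : FF Z) (constD (deg w))).filter (fun v => degRevLexGT r.lt w v) := by
      constructor
      · intro v hv
        rw [Finset.mem_filter] at hv ⊢
        rw [hdeg] at hv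
        exact ⟨hv.1, bgt_trans r hg hv.2⟩
      · intro hcon
        have hw' : w' ∈ (Finset.Icc (0 : FF Z) (constD (deg w))).filter
            (fun v => degRevLexGT r.lt w v) := by
          rw [Finset.mem_filter, Finset.mem_Icc]
          refine ⟨⟨zero_le, ?_⟩, hg⟩
          rw [Finsupp.le_def]
          intro x
          rw [constD_apply]
          calc w' x ≤ deg w' := apply_le_deg w' x
          _ ≤ deg w := by rw [hdeg]
        have := hcon hw'
        rw [Finset.mem_filter] at this
        exact bgt_irrefl r w' this.2
    have := Finset.card_lt_card hsub
    omega
  · show 0 < 1 + _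
    omega

theorem stp_wf : WellFounded (fun x y => Stp r y x) :=
  Subrelation.wf (fun h => stp_meas r h) (InvImage.wf (meas r) Nat.lt_wfRel.wf)

open Relation in
theorem stp_conf : ∀ a b c, ReflTransGen (Stp r) a b → ReflTransGen (Stp r) a c →
    Join (ReflTransGen (Stp r)) b c :=
  newman (stp_wf r) (stpLC r)

open Relation in
/-- elements connected to a normal form reduce to it -/
theorem conn_to_nf {u : FF Z} (hNF : ∀ x, ¬ Stp r (some u) x) {x : Option (FF Z)}
    (hconn : ReflTransGen (fun a b => Stp r a b ∨ Stp r b a) (some u) x) :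
    ReflTransGen (Stp r) x (some u) := by
  obtain ⟨d, hud, hxd⟩ := conn_join (stp_conf r) hconn
  rcases hud.cases_head with rfl | ⟨y, hy, -⟩
  · exact hxd
  · exact absurd hy (hNF y)

open Relation in
theorem desc_gt {u : FF Z} : ∀ {x : Option (FF Z)}, ReflTransGen (Stp r) x (some u) →
    x = some u ∨ ∃ w, x = some w ∧ degRevLexGT r.lt w u := by
  intro x hx
  induction hx using ReflTransGen.head_induction_on with
  | refl => exact Or.inl rfl
  | head h hrest ih =>
    rcases h with ⟨w, w', rfl, rfl, hmv, hg⟩ | ⟨w, rfl, rfl, -⟩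
    · rcases ih with he | ⟨v, he, hv⟩
      · obtain rfl := Option.some.inj he
        exact Or.inr ⟨w, rfl, hg⟩
      · obtain rfl := Option.some.inj he
        exact Or.inr ⟨w, rfl, bgt_trans r hg hv⟩
    · rcases ih with he | ⟨v, he, hv⟩ <;> exact nomatch he

open MvPolynomial

theorem genEntry_eq_X {i : Fin m} {j : Fin n} (h : (i,j) ∉ Z) :
    genEntry Z i j = MvPolynomial.X (cl i j h) := dif_neg h

theorem genEntry_eq_zero {i : Fin m} {j : Fin n} (h : (i,j) ∈ Z) :
    genEntry Z i j = 0 := dif_pos h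

theorem XX_eq (c1 c2 : σZ Z) :
    (MvPolynomial.X c1 * MvPolynomial.X c2 : MvPolynomial (σZ Z) ℂ) = monomial (qq c1 c2) 1 := by
  rw [X, X, monomial_mul, one_mul]
  rfl

theorem supp_monom (d : FF Z) : (monomial d (1:ℂ)).support = {d} := by
  classical
  rw [support_monomial]
  simp

theorem supp_binom {d e : FF Z} (h : d ≠ e) :
    (monomial d 1 - monomial e 1 : MvPolynomial (σZ Z) ℂ).support = {d, e} := by
  classical
  ext t
  rw [mem_support_iff, coeff_sub, coeff_monomial, coeff_monomial]
  simp only [Finset.mem_insert, Finset.mem_singleton]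
  split_ifs with hd he he
  all_goals try simp_all
  all_goals exact ⟨fun e1 => hd e1.symm, fun e2 => he e2.symm⟩

theorem isInitial_of_single {f : MvPolynomial (σZ Z) ℂ} {d : FF Z} (h : f.support = {d}) :
    IsInitial (degRevLexGT r.lt) f d :=
  ⟨by simp [h], fun d' hd' => Or.inl (by rw [h] at hd'; simpa using hd')⟩

theorem isInitial_binom {d e : FF Z} (hgt : degRevLexGT r.lt d e)
    {f : MvPolynomial (σZ Z) ℂ} (hf : f.support = {d, e}) :
    IsInitial (degRevLexGT r.lt) f d := by
  refine ⟨by simp [hf], fun d' hd' => ?_⟩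
  rw [hf] at hd'
  rcases Finset.mem_insert.1 hd' with rfl | hd'
  · exact Or.inl rfl
  · rw [Finset.mem_singleton] at hd'
    subst hd'
    exact Or.inr hgt

theorem minor_exists {i k : Fin m} {j l : Fin n} (hik : i ≠ k) (hjl : j ≠ l) :
    ∃ g ∈ minorsSet Z, g = genEntry Z i j * genEntry Z k l - genEntry Z i l * genEntry Z k j
      ∨ g = genEntry Z i l * genEntry Z k j - genEntry Z i j * genEntry Z k l := by
  rcases hik.lt_or_gt with h | h <;> rcases hjl.lt_or_gt with h' | h'
  · exact ⟨_, ⟨i, k, j, l, h, h', rfl⟩, Or.inl rfl⟩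
  · exact ⟨_, ⟨i, k, l, j, h, h', rfl⟩, Or.inr rfl⟩
  · refine ⟨_, ⟨k, i, j, l, h, h', rfl⟩, Or.inr ?_⟩
    ring
  · refine ⟨_, ⟨k, i, l, j, h, h', rfl⟩, Or.inl ?_⟩
    ring

variable {u : FF Z}

theorem qq_le {τ : FF Z} {i k : Fin m} {j l : Fin n} {h1 : (i,j) ∉ Z} {h2 : (k,l) ∉ Z}
    (hw : u = τ + sg i j h1 + sg k l h2) : qq (cl i j h1) (cl k l h2) ≤ u := by
  rw [hw]
  calc qq (cl i j h1) (cl k l h2) ≤ τ + qq (cl i j h1) (cl k l h2) := le_add_self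
  _ = τ + sg i j h1 + sg k l h2 := (add_assoc τ _ _).symm

theorem std_killed
    (hStd : ¬ ∃ g ∈ minorsSet Z, g ≠ 0 ∧ ∃ e, IsInitial (degRevLexGT r.lt) g e ∧ e ≤ u) :
    ¬ Killed u := by
  rintro ⟨i, k, j, l, h1, h2, hik, hjl, hz, τ, hw⟩
  obtain ⟨g, hmem, hg⟩ := minor_exists (Z := Z) hik hjl
  have hanti : genEntry Z i l * genEntry Z k j = 0 := by
    rcases hz with hz | hz
    · rw [genEntry_eq_zero hz, zero_mul]
    · rw [genEntry_eq_zero hz, mul_zero]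
  have hdiag : genEntry Z i j * genEntry Z k l = monomial (qq (cl i j h1) (cl k l h2)) 1 := by
    rw [genEntry_eq_X h1, genEntry_eq_X h2, XX_eq]
  refine hStd ⟨g, hmem, ?_, qq (cl i j h1) (cl k l h2), ?_, qq_le hw⟩
  · rcases hg with rfl | rfl
    · rw [hanti, hdiag, sub_zero]
      simp [monomial_eq_zero]
    · rw [hanti, hdiag, zero_sub, neg_ne_zero]
      simp [monomial_eq_zero]
  · rcases hg with rfl | rfl
    · rw [hanti, hdiag, sub_zero]
      exact isInitial_of_single r (supp_monom _)
    · rw [hanti, hdiag, zero_sub]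
      refine isInitial_of_single r ?_
      rw [support_neg]
      exact supp_monom _

theorem std_moves
    (hStd : ¬ ∃ g ∈ minorsSet Z, g ≠ 0 ∧ ∃ e, IsInitial (degRevLexGT r.lt) g e ∧ e ≤ u)
    {w' : FF Z} (hmv : Mv u w') : degRevLexGT r.lt w' u := by
  rcases bgt_or_bgt r (mv_ne hmv) with hgt | hgt
  · exfalso
    obtain ⟨i, k, j, l, h1, h2, h3, h4, τ, hik, hjl, hw, hw'⟩ := hmv
    have hq : degRevLexGT r.lt (qq (cl i j h1) (cl k l h2)) (qq (cl i l h3) (cl k j h4)) :=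
      qq_of_gt r (by exact hw) (by exact hw') hgt
    obtain ⟨g, hmem, hg⟩ := minor_exists (Z := Z) hik hjl
    have hdiag : genEntry Z i j * genEntry Z k l = monomial (qq (cl i j h1) (cl k l h2)) 1 := by
      rw [genEntry_eq_X h1, genEntry_eq_X h2, XX_eq]
    have hanti : genEntry Z i l * genEntry Z k j = monomial (qq (cl i l h3) (cl k j h4)) 1 := by
      rw [genEntry_eq_X h3, genEntry_eq_X h4, XX_eq]
    have hpq : qq (cl i j h1) (cl k l h2) ≠ qq (cl i l h3) (cl k j h4) :=
      qq_ne (cl_ne (Or.inr hjl)) (cl_ne (Or.inl hik))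
    refine hStd ⟨g, hmem, ?_, qq (cl i j h1) (cl k l h2), ?_, qq_le hw⟩
    · rcases hg with rfl | rfl
      · rw [hdiag, hanti, sub_ne_zero]
        intro hc
        exact hpq (by simpa [MvPolynomial.monomial_eq_monomial_iff] using hc)
      · rw [hdiag, hanti, sub_ne_zero]
        intro hc
        exact hpq (Eq.symm (by simpa [MvPolynomial.monomial_eq_monomial_iff] using hc))
    · rcases hg with rfl | rfl
      · rw [hdiag, hanti]
        exact isInitial_binom r hq (supp_binom hpq)
      · rw [hdiag, hanti]
        refine isInitial_binom r hq ?_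
        rw [Finset.pair_comm]
        exact supp_binom (Ne.symm hpq)
  · exact hgt

theorem std_NF
    (hStd : ¬ ∃ g ∈ minorsSet Z, g ≠ 0 ∧ ∃ e, IsInitial (degRevLexGT r.lt) g e ∧ e ≤ u) :
    ∀ x, ¬ Stp r (some u) x := by
  rintro x (⟨w, w', he, rfl, hmv, hg⟩ | ⟨w, he, rfl, hk⟩)
  · obtain rfl := Option.some.inj he
    exact bgt_asymm r hg (std_moves r hStd hmv)
  · obtain rfl := Option.some.inj he
    exact std_killed r hStd hk

/-- the connected component of `u` in the exchange graph -/
def CCset : Set (FF Z) :=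
  {w | Relation.ReflTransGen (fun a b => Stp r a b ∨ Stp r b a) (some u) (some w)}

theorem CC_self : u ∈ CCset r (u := u) := Relation.ReflTransGen.refl

theorem CC_mv {w w' : FF Z} (hmv : Mv w w') :
    w ∈ CCset r (u := u) ↔ w' ∈ CCset r (u := u) := by
  have hst : Stp r (some w) (some w') ∨ Stp r (some w') (some w) := by
    rcases bgt_or_bgt r (mv_ne hmv) with h | h
    · exact Or.inl (stp_mv r hmv h)
    · exact Or.inr (stp_mv r (mv_symm hmv) h)
  constructor
  · intro h
    exact h.tail hst
  · intro h
    exact h.tail hst.symm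

theorem CC_not_killed (hNF : ∀ x, ¬ Stp r (some u) x) {w : FF Z}
    (hw : w ∈ CCset r (u := u)) : ¬ Killed w := by
  intro hk
  have h1 : Relation.ReflTransGen (fun a b => Stp r a b ∨ Stp r b a) (some u) none :=
    hw.tail (Or.inl (stp_kill r hk))
  have h2 := conn_to_nf r hNF h1
  rcases h2.cases_head with he | ⟨y, hy, -⟩
  · exact nomatch he
  · exact stp_none r hy

theorem CC_gt (hNF : ∀ x, ¬ Stp r (some u) x) {w : FF Z}
    (hw : w ∈ CCset r (u := u)) : w = u ∨ degRevLexGT r.lt w u := by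
  rcases desc_gt r (conn_to_nf r hNF hw) with he | ⟨v, he, hv⟩
  · exact Or.inl (Option.some.inj he)
  · obtain rfl := Option.some.inj he
    exact Or.inr hv

open Classical in
noncomputable def lam (CC : Set (FF Z)) : MvPolynomial (σZ Z) ℂ →ₗ[ℂ] ℂ :=
  Finsupp.lsum ℂ (fun w => if w ∈ CC then (LinearMap.id : ℂ →ₗ[ℂ] ℂ) else 0) ∘ₗ
    (AddMonoidAlgebra.coeffLinearEquiv ℂ).toLinearMap

open Classical in
theorem lam_monomial (CC : Set (FF Z)) (d : FF Z) (c : ℂ) :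
    lam CC (monomial d c) = if d ∈ CC then c else 0 := by
  unfold lam
  have hc : (AddMonoidAlgebra.coeffLinearEquiv ℂ).toLinearMap (monomial d c) = Finsupp.single d c := rfl
  rw [LinearMap.comp_apply, hc, Finsupp.lsum_single]
  split_ifs <;> simp

theorem lam_initial {f : MvPolynomial (σZ Z) ℂ} (hu : IsInitial (degRevLexGT r.lt) f u)
    (hNF : ∀ x, ¬ Stp r (some u) x) : lam (CCset r (u := u)) f = coeff u f := by
  classical
  conv_lhs => rw [f.as_sum]
  rw [map_sum]
  rw [Finset.sum_eq_single u]
  · rw [lam_monomial]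
    rw [if_pos (CC_self r)]
  · intro w hw hne
    rw [lam_monomial]
    rw [if_neg]
    intro hwC
    rcases CC_gt r hNF hwC with he | hgt
    · exact hne he
    · rcases hu.2 w hw with he | hgt2
      · exact hne he
      · exact bgt_asymm r hgt hgt2
  · intro hu'
    exact absurd hu.1 hu'

theorem lam_span (hNF : ∀ x, ¬ Stp r (some u) x) {f : MvPolynomial (σZ Z) ℂ}
    (hf : f ∈ Ideal.span (minorsSet Z)) : lam (CCset r (u := u)) f = 0 := by
  classical
  have key : ∀ g ∈ minorsSet Z, ∀ rp : MvPolynomial (σZ Z) ℂ,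
      lam (CCset r (u := u)) (rp * g) = 0 := by
    rintro g ⟨i, k, j, l, hik, hjl, rfl⟩ rp
    induction rp using MvPolynomial.induction_on' with
    | add p q hp hq => rw [add_mul, map_add, hp, hq, add_zero]
    | monomial v c =>
      by_cases h1 : (i,j) ∈ Z
      · by_cases h3 : (i,l) ∈ Z
        · rw [genEntry_eq_zero h1, genEntry_eq_zero h3, zero_mul, zero_mul, sub_zero,
            mul_zero, map_zero]
        · by_cases h4 : (k,j) ∈ Z
          · rw [genEntry_eq_zero h1, genEntry_eq_zero h4, zero_mul, mul_zero, sub_zero,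
              mul_zero, map_zero]
          · -- monomial minor on the antidiagonal
            rw [genEntry_eq_zero h1, zero_mul, genEntry_eq_X h3, genEntry_eq_X h4, XX_eq,
              zero_sub, mul_neg, monomial_mul, mul_one, map_neg, lam_monomial, if_neg]
            · rw [neg_zero]
            · intro hC
              refine CC_not_killed r hNF hC ?_
              exact killed_of i k l j h3 h4 hik.ne hjl.ne' (Or.inl h1) v
                ((add_assoc v _ _).symm)
      · by_cases h2 : (k,l) ∈ Z
        · by_cases h3 : (i,l) ∈ Z
          · rw [genEntry_eq_zero h2, genEntry_eq_zero h3, mul_zero, zero_mul, sub_zero,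
              mul_zero, map_zero]
          · by_cases h4 : (k,j) ∈ Z
            · rw [genEntry_eq_zero h2, genEntry_eq_zero h4, mul_zero, mul_zero, sub_zero,
                mul_zero, map_zero]
            · rw [genEntry_eq_zero h2, mul_zero, genEntry_eq_X h3, genEntry_eq_X h4, XX_eq,
                zero_sub, mul_neg, monomial_mul, mul_one, map_neg, lam_monomial, if_neg]
              · rw [neg_zero]
              · intro hC
                refine CC_not_killed r hNF hC ?_
                exact killed_of i k l j h3 h4 hik.ne hjl.ne' (Or.inr h2) v
                  ((add_assoc v _ _).symm)
        · by_cases h3 : (i,l) ∈ Z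
          · rw [genEntry_eq_X h1, genEntry_eq_X h2, genEntry_eq_zero h3, zero_mul, sub_zero,
              XX_eq, monomial_mul, mul_one, lam_monomial, if_neg]
            intro hC
            refine CC_not_killed r hNF hC ?_
            exact killed_of i k j l h1 h2 hik.ne hjl.ne (Or.inl h3) v
              ((add_assoc v _ _).symm)
          · by_cases h4 : (k,j) ∈ Z
            · rw [genEntry_eq_X h1, genEntry_eq_X h2, genEntry_eq_zero h4, mul_zero, sub_zero,
                XX_eq, monomial_mul, mul_one, lam_monomial, if_neg]
              intro hC
              refine CC_not_killed r hNF hC ?_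
              exact killed_of i k j l h1 h2 hik.ne hjl.ne (Or.inr h4) v
                ((add_assoc v _ _).symm)
            · -- genuine binomial minor
              rw [genEntry_eq_X h1, genEntry_eq_X h2, genEntry_eq_X h3, genEntry_eq_X h4,
                XX_eq, XX_eq, mul_sub, monomial_mul, monomial_mul, mul_one, map_sub,
                lam_monomial, lam_monomial]
              have hmv : Mv (v + qq (cl i j h1) (cl k l h2)) (v + qq (cl i l h3) (cl k j h4)) :=
                mv_of i k j l h1 h2 h3 h4 hik.ne hjl.ne v
                  ((add_assoc v _ _).symm) ((add_assoc v _ _).symm)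
              rw [if_congr (CC_mv r hmv) rfl rfl]
              exact sub_self _
  have H := Submodule.span_induction
    (p := fun f _ => ∀ rp : MvPolynomial (σZ Z) ℂ, lam (CCset r (u := u)) (rp * f) = 0)
    (fun g hg => key g hg)
    (fun rp => by rw [mul_zero, map_zero])
    (fun x y hx hy ihx ihy rp => by rw [mul_add, map_add, ihx, ihy, add_zero])
    (fun a x hx ih rp => by rw [smul_eq_mul, ← mul_assoc]; exact ih (rp * a)) hf
  have := H 1
  rwa [one_mul] at this

theorem keyLemma {f : MvPolynomial (σZ Z) ℂ} (hf : f ∈ Ideal.span (minorsSet Z))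
    (hu : IsInitial (degRevLexGT r.lt) f u) :
    ∃ g ∈ minorsSet Z, g ≠ 0 ∧ ∃ e, IsInitial (degRevLexGT r.lt) g e ∧ e ≤ u := by
  by_contra hStd
  have hNF := std_NF r hStd
  have h1 := lam_span r hNF hf
  have h2 := lam_initial r hu hNF
  rw [h1] at h2
  exact (MvPolynomial.mem_support_iff.1 hu.1) h2.symm

end Main

end Stmt6

/-- The two-by-two minors of the generic `m × n` matrix with prescribed zero
entries form a universal degree revlex Gröbner basis of the ideal they generate:
for every total order on the variables, the initial monomials of the minors
generate the initial ideal. -/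
theorem stmt6 (m n : ℕ) (Z : Set (Fin m × Fin n))
    (r : LinearOrder {p : Fin m × Fin n // p ∉ Z}) :
    Ideal.span {mon : MvPolynomial {p : Fin m × Fin n // p ∉ Z} ℂ |
        ∃ g ∈ minorsSet Z, g ≠ 0 ∧
          ∃ d, IsInitial (degRevLexGT r.lt) g d ∧ mon = MvPolynomial.monomial d 1} =
      initialIdeal (degRevLexGT r.lt) (Ideal.span (minorsSet Z)) := by
  rw [initialIdeal]
  apply le_antisymm
  · apply Ideal.span_le.2
    rintro mon ⟨g, hg, hne, d, hd, rfl⟩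
    exact Ideal.subset_span ⟨g, Ideal.subset_span hg, hne, d, hd, rfl⟩
  · apply Ideal.span_le.2
    rintro mon ⟨f, hf, hfne, u, hu, rfl⟩
    obtain ⟨g, hg, hgne, e, he, hle⟩ := Stmt6.keyLemma r hf hu
    have heq : MvPolynomial.monomial u (1:ℂ)
        = MvPolynomial.monomial (u - e) 1 * MvPolynomial.monomial e 1 := by
      rw [MvPolynomial.monomial_mul, one_mul, tsub_add_cancel_of_le hle]
    rw [heq]
    exact Ideal.mul_mem_left _ _ (Ideal.subset_span ⟨g, hg, hgne, e, he, rfl⟩)
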